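/- Let G be a group with positive cone P. Let (G_n)_{n ∈ ℤ} and (A_n)_{n ∈ ℤ} be families of subgroups of G such that A_n ⊆ G_n and A_n ⊆ G_{n+1} for all n ∈ ℤ. For each m ≥ 0 let G_(m) be the subgroup of G generated by the union of the G_j for |j| ≤ m, and set P_(m) := P ∩ G_(m); assume that the union of the G_(m) over all m ≥ 0 is G. Assume that P is not Conradian (there exist a, b ∈ P such that a⁻¹ · b · aⁿ ∉ P for every positive integer n) and that P has no minimal positive element (for every p ∈ P there exists q ∈ P with q ≠ p and q⁻¹p ∈ P). Assume further: (D) for every m ≥ 0 there exists p̃_m ∈ P_(m) such that every q ∈ P_(m) satisfies q = p̃_m or p̃_m⁻¹ · q ∈ P; (C1) for every n ∈ ℤ there exists m ≥ 0 with G_n ∪ G_{n+1} ⊆ G_(m) such that every subgroup of G_(m) convex with respect to P_(m) that contains A_n also contains G_{n+1}; (C2) for every n ∈ ℤ there exists m ≥ 0 with G_n ∪ G_{n+1} ⊆ G_(m) such that every subgroup of G_(m) convex with respect to P_(m) that contains A_n also contains G_n; (C3) for every m ≥ 0 there exists an integer ℓ ≥ m such that every subgroup of G_(ℓ) convex with respect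 to P_(ℓ) that contains p̃_m also contains A_ℓ. Then P is approximated by its conjugates: for every finite subset S ⊆ P there exists g ∈ G such that g·s·g⁻¹ ∈ P for all s ∈ S and g⁻¹Pg ≠ P. In particular P is not isolated: for every finite subset S ⊆ P there exists a positive cone Q of G with Q ≠ P and S ⊆ Q. -/

import Mathlib

/-- `P` is a positive cone of the group `G`: it is closed under multiplication and
`G` is the disjoint union of `P`, `P⁻¹` and `{1}`. -/
def IsPositiveCone {G : Type*} [Group G] (P : Set G) : Prop :=
  (∀ a ∈ P, ∀ b ∈ P, a * b ∈ P) ∧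
  (∀ g : G, g ∈ P ∨ g⁻¹ ∈ P ∨ g = 1) ∧
  (∀ g ∈ P, g⁻¹ ∉ P) ∧ (1 : G) ∉ P

/-- A subgroup `C` of `G` is convex with respect to `P` if whenever `c₁, c₂ ∈ C`
and `g ∈ G` satisfy `c₁⁻¹ * g ∈ P ∪ {1}` and `g⁻¹ * c₂ ∈ P ∪ {1}`, then `g ∈ C`. -/
def IsConvex {G : Type*} [Group G] (P : Set G) (C : Subgroup G) : Prop :=
  ∀ c₁ ∈ C, ∀ c₂ ∈ C, ∀ g : G,
    c₁⁻¹ * g ∈ P ∪ {1} → g⁻¹ * c₂ ∈ P ∪ {1} → g ∈ C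

/-- `C` is a subgroup of `H` which is convex with respect to the set `Q`
(a positive cone of `H`): whenever `c₁, c₂ ∈ C` and `g ∈ H` satisfy
`c₁⁻¹ * g ∈ Q ∪ {1}` and `g⁻¹ * c₂ ∈ Q ∪ {1}`, then `g ∈ C`. -/
def IsConvexIn {G : Type*} [Group G] (H : Subgroup G) (Q : Set G) (C : Subgroup G) : Prop :=
  C ≤ H ∧ ∀ c₁ ∈ C, ∀ c₂ ∈ C, ∀ g ∈ H,
    c₁⁻¹ * g ∈ Q ∪ {1} → g⁻¹ * c₂ ∈ Q ∪ {1} → g ∈ C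


theorem stmt6 {G : Type*} [Group G] (P : Set G) (hP : IsPositiveCone P)
    (Gn An : ℤ → Subgroup G)
    (hAn : ∀ n : ℤ, An n ≤ Gn n) (hAn' : ∀ n : ℤ, An n ≤ Gn (n + 1))
    (GM : ℕ → Subgroup G)
    (hGM : ∀ m : ℕ,
      GM m = Subgroup.closure (⋃ j ∈ {j : ℤ | |j| ≤ (m : ℤ)}, (Gn j : Set G)))
    (hunion : ∀ x : G, ∃ m : ℕ, x ∈ GM m)
    -- `P` is not Conradian
    (hnc : ∃ a ∈ P, ∃ b ∈ P, ∀ n : ℕ, 0 < n → a⁻¹ * b * a ^ n ∉ P)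
    -- `P` has no minimal positive element
    (hdense : ∀ p ∈ P, ∃ q ∈ P, q ≠ p ∧ q⁻¹ * p ∈ P)
    -- (D) : each `P_(m) = P ∩ G_(m)` is discrete with minimal positive element `pt m`
    (pt : ℕ → G)
    (hD : ∀ m : ℕ, pt m ∈ P ∩ (GM m : Set G) ∧
      ∀ q ∈ P ∩ (GM m : Set G), q = pt m ∨ (pt m)⁻¹ * q ∈ P)
    -- (C1)
    (hC1 : ∀ n : ℤ, ∃ m : ℕ, Gn n ≤ GM m ∧ Gn (n + 1) ≤ GM m ∧
      ∀ C : Subgroup G, IsConvexIn (GM m) (P ∩ (GM m : Set G)) C →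
        An n ≤ C → Gn (n + 1) ≤ C)
    -- (C2)
    (hC2 : ∀ n : ℤ, ∃ m : ℕ, Gn n ≤ GM m ∧ Gn (n + 1) ≤ GM m ∧
      ∀ C : Subgroup G, IsConvexIn (GM m) (P ∩ (GM m : Set G)) C →
        An n ≤ C → Gn n ≤ C)
    -- (C3)
    (hC3 : ∀ m : ℕ, ∃ ℓ : ℕ, m ≤ ℓ ∧
      ∀ C : Subgroup G, IsConvexIn (GM ℓ) (P ∩ (GM ℓ : Set G)) C →
        pt m ∈ C → An (ℓ : ℤ) ≤ C) :
    -- `P` is approximated by its conjugates …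
    (∀ S : Finset G, (S : Set G) ⊆ P → ∃ g : G,
      (∀ s ∈ S, g * s * g⁻¹ ∈ P) ∧ (fun x => g⁻¹ * x * g) '' P ≠ P) ∧
    -- … in particular `P` is not isolated
    (∀ S : Finset G, (S : Set G) ⊆ P → ∃ Q : Set G,
      IsPositiveCone Q ∧ Q ≠ P ∧ (S : Set G) ⊆ Q) := by

  obtain ⟨hmul, htot, hasym, hone⟩ := hP
  classical
  -- helpers about P ∪ {1}
  have hmulL : ∀ x ∈ P, ∀ y ∈ P ∪ {1}, x * y ∈ P := by
    intro x hx y hy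
    rcases hy with hy | hy
    · exact hmul x hx y hy
    · rw [Set.mem_singleton_iff] at hy; subst hy; simpa using hx
  have hmulR : ∀ x ∈ P ∪ {1}, ∀ y ∈ P, x * y ∈ P := by
    intro x hx y hy
    rcases hx with hx | hx
    · exact hmul x hx y hy
    · rw [Set.mem_singleton_iff] at hx; subst hx; simpa using hy
  have hmulU : ∀ x ∈ P ∪ {1}, ∀ y ∈ P ∪ {1}, x * y ∈ P ∪ {1} := by
    intro x hx y hy
    rcases hy with hy | hy
    · exact Or.inl (hmulR x hx y hy)
    · rw [Set.mem_singleton_iff] at hy; subst hy; simpa using hx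
  -- monotonicity of GM
  have hmono : ∀ m m' : ℕ, m ≤ m' → GM m ≤ GM m' := by
    intro m m' h
    rw [hGM m, hGM m']
    apply Subgroup.closure_mono
    intro x hx
    simp only [Set.mem_iUnion, Set.mem_setOf_eq] at hx ⊢
    obtain ⟨j, hj, hx⟩ := hx
    exact ⟨j, le_trans hj (by exact_mod_cast h), hx⟩
  have main : ∀ S : Finset G, (S : Set G) ⊆ P → ∃ g : G,
      (∀ s ∈ S, g * s * g⁻¹ ∈ P) ∧ (fun x => g⁻¹ * x * g) '' P ≠ P := by
    intro S hS
    obtain ⟨a, ha, b, hb, hab⟩ := hnc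
    -- choose m with S ∪ {a} ⊆ GM m
    obtain ⟨m, hm⟩ : ∃ m : ℕ, ∀ s ∈ insert a S, s ∈ GM m := by
      refine ⟨(insert a S).sup fun s => (hunion s).choose, fun s hs => ?_⟩
      exact hmono _ _ (Finset.le_sup (f := fun s => (hunion s).choose) hs)
        (hunion s).choose_spec
    set p := pt m with hp
    have hpP : p ∈ P := (hD m).1.1
    have hpGM : p ∈ GM m := (hD m).1.2
    have hmin := (hD m).2
    have haGM : a ∈ GM m := hm a (Finset.mem_insert_self a S)
    have hpnP : ∀ n : ℕ, 0 < n → p ^ n ∈ P := by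
      intro n hn
      induction n with
      | zero => omega
      | succ k ih =>
        rcases Nat.eq_zero_or_pos k with hk | hk
        · subst hk; simpa using hpP
        · rw [pow_succ]; exact hmul _ (ih hk) _ hpP
    -- Part 1 : conjugation by p preserves positivity on P ∩ GM m
    have part1 : ∀ s ∈ S, p * s * p⁻¹ ∈ P := by
      intro s hsF
      have hsP : s ∈ P := hS hsF
      have hsGM : s ∈ GM m := hm s (Finset.mem_insert_of_mem hsF)
      by_contra hcon
      have hne : p * s * p⁻¹ ≠ 1 := by
        intro h
        have hs1 : s = 1 := by
          have := congrArg (fun w => p⁻¹ * w * p) h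
          simpa [mul_assoc] using this
        exact hone (hs1 ▸ hsP)
      have hinv : (p * s * p⁻¹)⁻¹ ∈ P := by
        rcases htot (p * s * p⁻¹) with h | h | h
        · exact absurd h hcon
        · exact h
        · exact absurd h hne
      have hinvGM : (p * s * p⁻¹)⁻¹ ∈ GM m :=
        (GM m).inv_mem ((GM m).mul_mem ((GM m).mul_mem hpGM hsGM) ((GM m).inv_mem hpGM))
      rcases hmin _ ⟨hinv, hinvGM⟩ with h | h
      · -- (p s p⁻¹)⁻¹ = p gives s = p⁻¹
        have hs : p⁻¹ = s := by
          have := congrArg (fun w => p⁻¹ * (w⁻¹) * p) h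
          simpa [mul_assoc, ← hp] using this.symm
        exact hasym p hpP (by rw [hs]; exact hsP)
      · have h2 : s⁻¹ * p⁻¹ ∈ P := by
          have e : p⁻¹ * (p * s * p⁻¹)⁻¹ = s⁻¹ * p⁻¹ := by group
          rwa [e] at h
        have h3 : p⁻¹ ∈ P := by
          have := hmul s hsP _ h2
          simpa [mul_assoc] using this
        exact hasym p hpP h3
    refine ⟨p, part1, ?_⟩
    intro himg
    -- conjugation by p and p⁻¹ preserves P
    have hcw : ∀ x ∈ P, p⁻¹ * x * p ∈ P := by
      intro x hx
      have hx2 : p⁻¹ * x * p ∈ (fun x => p⁻¹ * x * p) '' P := ⟨x, hx, rfl⟩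
      rwa [himg] at hx2
    have hcw' : ∀ x ∈ P, p * x * p⁻¹ ∈ P := by
      intro x hx
      have hx2 : x ∈ (fun x => p⁻¹ * x * p) '' P := by rw [himg]; exact hx
      obtain ⟨y, hy, hxy⟩ := hx2
      have : y = p * x * p⁻¹ := by
        have := congrArg (fun w => p * w * p⁻¹) hxy
        simpa [mul_assoc] using this
      rwa [← this]
    have hpow : ∀ k : ℕ, ∀ x ∈ P, (p ^ k)⁻¹ * x * p ^ k ∈ P := by
      intro k
      induction k with
      | zero => intro x hx; simpa using hx
      | succ k ih =>
        intro x hx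
        have h1 := hcw _ (ih x hx)
        have e : p⁻¹ * ((p ^ k)⁻¹ * x * p ^ k) * p = (p ^ (k+1))⁻¹ * x * p ^ (k+1) := by
          rw [pow_succ]; group
        rwa [e] at h1
    have hpow' : ∀ k : ℕ, ∀ x ∈ P, p ^ k * x * (p ^ k)⁻¹ ∈ P := by
      intro k
      induction k with
      | zero => intro x hx; simpa using hx
      | succ k ih =>
        intro x hx
        have h1 := hcw' _ (ih x hx)
        have e : p * (p ^ k * x * (p ^ k)⁻¹) * p⁻¹ = p ^ (k+1) * x * (p ^ (k+1))⁻¹ := by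
          rw [pow_succ']; group
        rwa [e] at h1
    -- the subgroup of elements bounded by powers of p
    set Bs : Set G := {g | ∃ n : ℕ, 0 < n ∧ g⁻¹ * p ^ n ∈ P ∧ p ^ n * g ∈ P} with hBs
    have hpBs : p ∈ Bs := by
      refine ⟨2, by norm_num, ?_, ?_⟩
      · have e : p⁻¹ * p ^ 2 = p := by group
        rw [e]; exact hpP
      · exact hmul _ (hpnP 2 (by norm_num)) _ hpP
    have hBone : (1 : G) ∈ Bs := by
      refine ⟨1, one_pos, ?_, ?_⟩
      · simpa using hpP
      · simpa using hpP
    have hBinv : ∀ g ∈ Bs, g⁻¹ ∈ Bs := by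
      rintro g ⟨n, hn, h1, h2⟩
      refine ⟨n, hn, ?_, ?_⟩
      · have h3 := hpow n _ h2
        have e : (p ^ n)⁻¹ * (p ^ n * g) * p ^ n = (g⁻¹)⁻¹ * p ^ n := by group
        rwa [e] at h3
      · have h3 := hpow' n _ h1
        have e : p ^ n * (g⁻¹ * p ^ n) * (p ^ n)⁻¹ = p ^ n * g⁻¹ := by group
        rwa [e] at h3
    have hBmul : ∀ g ∈ Bs, ∀ h ∈ Bs, g * h ∈ Bs := by
      rintro g ⟨n, hn, hg1, hg2⟩ h ⟨k, hk, hh1, hh2⟩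
      refine ⟨n + k, by omega, ?_, ?_⟩
      · have h3 := hpow k _ hg1
        have h4 := hmul _ hh1 _ h3
        have e : h⁻¹ * p ^ k * ((p ^ k)⁻¹ * (g⁻¹ * p ^ n) * p ^ k) = (g * h)⁻¹ * p ^ (n + k) := by
          rw [pow_add]; group
        rwa [e] at h4
      · have h3 := hpow' k _ hg2
        have h4 := hmul _ h3 _ hh2
        have e : p ^ k * (p ^ n * g) * (p ^ k)⁻¹ * (p ^ k * h) = p ^ (n + k) * (g * h) := by
          rw [add_comm n k, pow_add]; group
        rwa [e] at h4
    have hBconv : ∀ c₁ ∈ Bs, ∀ c₂ ∈ Bs, ∀ g : G,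
        c₁⁻¹ * g ∈ P ∪ {1} → g⁻¹ * c₂ ∈ P ∪ {1} → g ∈ Bs := by
      rintro c₁ ⟨n₁, hn₁, hc11, hc12⟩ c₂ ⟨n₂, hn₂, hc21, hc22⟩ g hg1 hg2
      have hu : g⁻¹ * p ^ n₂ ∈ P := by
        have h3 := hmulR _ hg2 _ hc21
        have e : g⁻¹ * c₂ * (c₂⁻¹ * p ^ n₂) = g⁻¹ * p ^ n₂ := by group
        rwa [e] at h3
      have hl : p ^ n₁ * g ∈ P := by
        have h3 := hmulL _ hc12 _ hg1
        have e : p ^ n₁ * c₁ * (c₁⁻¹ * g) = p ^ n₁ * g := by group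
        rwa [e] at h3
      refine ⟨n₁ + n₂, by omega, ?_, ?_⟩
      · have h3 := hmul _ hu _ (hpnP n₁ hn₁)
        have e : g⁻¹ * p ^ n₂ * p ^ n₁ = g⁻¹ * p ^ (n₁ + n₂) := by
          rw [add_comm n₁ n₂, pow_add]; group
        rwa [e] at h3
      · have h3 := hmul _ (hpnP n₂ hn₂) _ hl
        have e : p ^ n₂ * (p ^ n₁ * g) = p ^ (n₁ + n₂) * g := by
          rw [add_comm n₁ n₂, pow_add]; group
        rwa [e] at h3
    set B : Subgroup G :=
      { carrier := Bs
        one_mem' := hBone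
        mul_mem' := fun {x y} hx hy => hBmul x hx y hy
        inv_mem' := fun {x} hx => hBinv x hx } with hB
    have hBmem : ∀ x : G, x ∈ B ↔ x ∈ Bs := fun x => Iff.rfl
    -- B ⊓ GM ℓ is convex in GM ℓ
    have hBGM : ∀ ℓ : ℕ, IsConvexIn (GM ℓ) (P ∩ (GM ℓ : Set G)) (B ⊓ GM ℓ) := by
      intro ℓ
      constructor
      · exact inf_le_right
      · intro c₁ hc₁ c₂ hc₂ g hgG h1 h2
        rw [Subgroup.mem_inf] at hc₁ hc₂ ⊢
        refine ⟨?_, hgG⟩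
        apply hBconv c₁ hc₁.1 c₂ hc₂.1 g
        · rcases h1 with h | h
          · exact Or.inl h.1
          · exact Or.inr h
        · rcases h2 with h | h
          · exact Or.inl h.1
          · exact Or.inr h
    obtain ⟨ℓ, hℓm, hℓ⟩ := hC3 m
    have hAB : An (ℓ : ℤ) ≤ B := by
      have h1 : p ∈ B ⊓ GM ℓ := by
        rw [Subgroup.mem_inf]
        exact ⟨hpBs, hmono m ℓ hℓm hpGM⟩
      exact (hℓ (B ⊓ GM ℓ) (hBGM ℓ) h1).trans inf_le_left
    have step1 : ∀ n : ℤ, An n ≤ B → Gn (n + 1) ≤ B := by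
      intro n hAnB
      obtain ⟨m₁, hg1, hg2, hcon⟩ := hC1 n
      have h1 : An n ≤ B ⊓ GM m₁ := le_inf hAnB ((hAn n).trans hg1)
      exact (hcon _ (hBGM m₁) h1).trans inf_le_left
    have step2 : ∀ n : ℤ, An n ≤ B → Gn n ≤ B := by
      intro n hAnB
      obtain ⟨m₁, hg1, hg2, hcon⟩ := hC2 n
      have h1 : An n ≤ B ⊓ GM m₁ := le_inf hAnB ((hAn n).trans hg1)
      exact (hcon _ (hBGM m₁) h1).trans inf_le_left
    have hup : ∀ k : ℕ, Gn ((ℓ : ℤ) + k) ≤ B := by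
      intro k
      induction k with
      | zero => simpa using step2 (ℓ : ℤ) hAB
      | succ k ih =>
        have h1 : An ((ℓ : ℤ) + k) ≤ B := (hAn _).trans ih
        have h2 := step1 _ h1
        have e : ((ℓ : ℤ) + (k : ℤ)) + 1 = (ℓ : ℤ) + ((k : ℕ) + 1 : ℕ) := by push_cast; ring
        rwa [e] at h2
    have hdown : ∀ k : ℕ, Gn ((ℓ : ℤ) - k) ≤ B := by
      intro k
      induction k with
      | zero => simpa using step2 (ℓ : ℤ) hAB
      | succ k ih =>
        have e : ((ℓ : ℤ) - ((k : ℕ) + 1 : ℕ)) + 1 = (ℓ : ℤ) - k := by push_cast; ring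
        have h1 : An ((ℓ : ℤ) - ((k : ℕ) + 1 : ℕ)) ≤ B := by
          have := hAn' ((ℓ : ℤ) - ((k : ℕ) + 1 : ℕ))
          rw [e] at this
          exact this.trans ih
        exact step2 _ h1
    have hGnall : ∀ n : ℤ, Gn n ≤ B := by
      intro n
      rcases le_or_gt (ℓ : ℤ) n with h | h
      · have h2 := hup (n - ℓ).toNat
        rwa [show (ℓ : ℤ) + ((n - (ℓ : ℤ)).toNat : ℤ) = n by
          rw [Int.toNat_of_nonneg (by omega)]; ring] at h2
      · have h2 := hdown ((ℓ : ℤ) - n).toNat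
        rwa [show (ℓ : ℤ) - (((ℓ : ℤ) - n).toNat : ℤ) = n by
          rw [Int.toNat_of_nonneg (by omega)]; ring] at h2
    -- hence a ∈ B
    obtain ⟨ma, hma⟩ := hunion a
    have hGMB : GM ma ≤ B := by
      rw [hGM ma]
      refine (Subgroup.closure_le B).mpr ?_
      intro x hx
      simp only [Set.mem_iUnion, Set.mem_setOf_eq] at hx
      obtain ⟨j, hj, hx⟩ := hx
      exact hGnall j hx
    have haB : a ∈ Bs := hGMB hma
    obtain ⟨N, hN, haU, -⟩ := haB
    -- p ≤ a
    have hpa : p⁻¹ * a ∈ P ∪ {1} := by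
      rcases hmin a ⟨ha, haGM⟩ with h | h
      · right; rw [Set.mem_singleton_iff, h, ← hp]; group
      · exact Or.inl h
    have hkey : ∀ k : ℕ, (p ^ k)⁻¹ * a ^ k ∈ P ∪ {1} := by
      intro k
      induction k with
      | zero => right; rw [Set.mem_singleton_iff]; group
      | succ k ih =>
        have h1 : p⁻¹ * ((p ^ k)⁻¹ * a ^ k) * p ∈ P ∪ {1} := by
          rcases ih with h | h
          · exact Or.inl (hcw _ h)
          · right
            rw [Set.mem_singleton_iff] at h ⊢
            rw [h]; group
        have h2 := hmulU _ h1 _ hpa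
        have e : p⁻¹ * ((p ^ k)⁻¹ * a ^ k) * p * (p⁻¹ * a) = (p ^ (k+1))⁻¹ * a ^ (k+1) := by
          rw [pow_succ, pow_succ]; group
        rwa [e] at h2
    have hfin : a⁻¹ * b * a ^ N ∈ P := by
      have h1 := hmul _ haU _ (hpow N b hb)
      have h2 := hmulL _ h1 _ (hkey N)
      have e : a⁻¹ * p ^ N * ((p ^ N)⁻¹ * b * p ^ N) * ((p ^ N)⁻¹ * a ^ N) = a⁻¹ * b * a ^ N := by
        group
      rwa [e] at h2
    exact hab N hN hfin
  refine ⟨main, ?_⟩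
  intro S hS
  obtain ⟨g, h1, h2⟩ := main S hS
  refine ⟨(fun x => g⁻¹ * x * g) '' P, ⟨?_, ?_, ?_, ?_⟩, h2, ?_⟩
  · rintro x ⟨x', hx', rfl⟩ y ⟨y', hy', rfl⟩
    refine ⟨x' * y', hmul _ hx' _ hy', ?_⟩
    show g⁻¹ * (x' * y') * g = (g⁻¹ * x' * g) * (g⁻¹ * y' * g)
    group
  · intro z
    rcases htot (g * z * g⁻¹) with h | h | h
    · refine Or.inl ⟨_, h, ?_⟩
      show g⁻¹ * (g * z * g⁻¹) * g = z
      group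
    · refine Or.inr (Or.inl ⟨_, h, ?_⟩)
      show g⁻¹ * (g * z * g⁻¹)⁻¹ * g = z⁻¹
      group
    · refine Or.inr (Or.inr ?_)
      have := congrArg (fun w => g⁻¹ * w * g) h
      simpa [mul_assoc] using this
  · rintro z ⟨x, hx, rfl⟩ ⟨y, hy, hyx⟩
    have hxy : y = x⁻¹ := by
      have hyx' : g⁻¹ * y * g = (g⁻¹ * x * g)⁻¹ := hyx
      have h3 : g⁻¹ * y * g = g⁻¹ * x⁻¹ * g := by
        rw [hyx']; group
      have := congrArg (fun w => g * w * g⁻¹) h3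
      simpa [mul_assoc] using this
    exact hasym x hx (hxy ▸ hy)
  · rintro ⟨x, hx, hx1⟩
    have hxo : x = 1 := by
      have := congrArg (fun w => g * w * g⁻¹) hx1
      simpa [mul_assoc] using this
    exact hone (hxo ▸ hx)
  · intro s hs
    refine ⟨g * s * g⁻¹, h1 s hs, ?_⟩
    show g⁻¹ * (g * s * g⁻¹) * g = s
    group
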